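/- For any equivalence-like relation R on LTSs such that (i) two-sided simulation implies R and (ii) R implies trace-language equality, and for any history-deterministic LTSs A and B: (A,B) ∈ R if and only if L_T(A) = L_T(B). -/
import Mathlib


/-- A labelled transition system over alphabet `A`. -/
structure LTS (A : Type) where
  Conf : Type
  init : Conf
  Step : Conf → A → Conf → Prop

/-- `Reads L c w` : there is a path from configuration `c` reading the word `w`. -/
inductive LTS.Reads {A : Type} (L : LTS A) : L.Conf → List A → Prop
  | nil (c : L.Conf) : LTS.Reads L c []
  | cons {c c' : L.Conf} {a : A} {w : List A} :
      L.Step c a c' → LTS.Reads L c' w → LTS.Reads L c (a :: w)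

/-- The trace language of an LTS: all words readable from the initial configuration. -/
def LTS.TraceLang {A : Type} (L : LTS A) : Set (List A) :=
  {w | L.Reads L.init w}

/-- `Simulates P Q` : `P` simulates `Q` (Duplicator plays in `P`, Spoiler in `Q`),
via a simulation relation containing the pair of initial configurations. -/
def Simulates {A : Type} (P Q : LTS A) : Prop :=
  ∃ S : P.Conf → Q.Conf → Prop, S P.init Q.init ∧
    ∀ cP cQ, S cP cQ → ∀ a cQ', Q.Step cQ a cQ' →
      ∃ cP', P.Step cP a cP' ∧ S cP' cQ'

/-- Two-sided simulation: each LTS simulates the other. -/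
def TwoSidedSim {A : Type} (P Q : LTS A) : Prop :=
  Simulates P Q ∧ Simulates Q P

/-- The run induced by a resolver `r` (a function of the history of the run,
the current configuration and the next letter) is valid along `w`:
every transition chosen by the resolver is enabled. -/
inductive ResolverRun {A : Type} (L : LTS A)
    (r : List (L.Conf × A) → L.Conf → A → L.Conf) :
    List (L.Conf × A) → L.Conf → List A → Prop
  | nil (h : List (L.Conf × A)) (c : L.Conf) : ResolverRun L r h c []
  | cons {h : List (L.Conf × A)} {c : L.Conf} {a : A} {w : List A} :
      L.Step c a (r h c a) →
      ResolverRun L r (h ++ [(c, a)]) (r h c a) w →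
      ResolverRun L r h c (a :: w)

/-- `r` is a resolver for `L`: following `r` from the initial configuration
produces a valid run over every word of the trace language. -/
def IsResolver {A : Type} (L : LTS A)
    (r : List (L.Conf × A) → L.Conf → A → L.Conf) : Prop :=
  ∀ w ∈ L.TraceLang, ResolverRun L r [] L.init w

/-- An LTS is history-deterministic if it admits a resolver. -/
def HistoryDeterministic {A : Type} (L : LTS A) : Prop :=
  ∃ r, IsResolver L r

/-- Reading a word with an explicit endpoint. -/
inductive LTS.ReadsTo {A : Type} (L : LTS A) : L.Conf → List A → L.Conf → Prop
  | nil (c : L.Conf) : LTS.ReadsTo L c [] c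
  | cons {c c' c'' : L.Conf} {a : A} {w : List A} :
      L.Step c a c' → LTS.ReadsTo L c' w c'' → LTS.ReadsTo L c (a :: w) c''

theorem readsTo_reads {A : Type} {L : LTS A} {c c' : L.Conf} {w : List A}
    (h : L.ReadsTo c w c') : L.Reads c w := by
  induction h with
  | nil => exact LTS.Reads.nil _
  | cons s _ ih => exact LTS.Reads.cons s ih

theorem readsTo_snoc {A : Type} {L : LTS A} {c c' c'' : L.Conf} {w : List A} {a : A}
    (h : L.ReadsTo c w c') (s : L.Step c' a c'') : L.ReadsTo c (w ++ [a]) c'' := by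
  induction h with
  | nil => exact LTS.ReadsTo.cons s (LTS.ReadsTo.nil _)
  | cons s' _ ih => exact LTS.ReadsTo.cons s' (ih s)

/-- The history-and-configuration determined by a resolver after a word. -/
def runHC {A : Type} (L : LTS A) (r : List (L.Conf × A) → L.Conf → A → L.Conf) :
    List (L.Conf × A) → L.Conf → List A → List (L.Conf × A) × L.Conf
  | h, c, [] => (h, c)
  | h, c, a :: w => runHC L r (h ++ [(c, a)]) (r h c a) w

theorem resolverRun_snoc_step {A : Type} {L : LTS A}
    {r : List (L.Conf × A) → L.Conf → A → L.Conf} {a : A} :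
    ∀ {w : List A} {h : List (L.Conf × A)} {c : L.Conf},
      ResolverRun L r h c (w ++ [a]) →
      L.Step (runHC L r h c w).2 a
        (r (runHC L r h c w).1 (runHC L r h c w).2 a) := by
  intro w
  induction w with
  | nil =>
    intro h c hr
    cases hr with
    | cons s _ => exact s
  | cons b w ih =>
    intro h c hr
    cases hr with
    | cons s rest => exact ih rest

theorem runHC_snoc {A : Type} {L : LTS A}
    {r : List (L.Conf × A) → L.Conf → A → L.Conf} {a : A} :
    ∀ {w : List A} {h : List (L.Conf × A)} {c : L.Conf},
      runHC L r h c (w ++ [a]) =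
        ((runHC L r h c w).1 ++ [((runHC L r h c w).2, a)],
          r (runHC L r h c w).1 (runHC L r h c w).2 a) := by
  intro w
  induction w with
  | nil => intro h c; rfl
  | cons b w ih => intro h c; exact ih

theorem simulates_of_resolver {A : Type} {P Q : LTS A}
    {r : List (P.Conf × A) → P.Conf → A → P.Conf}
    (hr : IsResolver P r) (hsub : Q.TraceLang ⊆ P.TraceLang) :
    Simulates P Q := by
  refine ⟨fun cP cQ => ∃ w : List A, Q.ReadsTo Q.init w cQ ∧
      cP = (runHC P r [] P.init w).2, ⟨[], LTS.ReadsTo.nil _, rfl⟩, ?_⟩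
  rintro cP cQ ⟨w, hw, rfl⟩ a cQ' hstep
  have hwa : (w ++ [a]) ∈ Q.TraceLang := readsTo_reads (readsTo_snoc hw hstep)
  have hrun := hr _ (hsub hwa)
  have hst := resolverRun_snoc_step (a := a) (w := w) hrun
  refine ⟨(runHC P r [] P.init (w ++ [a])).2, ?_, ⟨w ++ [a], readsTo_snoc hw hstep, rfl⟩⟩
  rw [runHC_snoc]
  exact hst

theorem reads_of_readsToAux {A : Type} {L : LTS A} {c : L.Conf} {w : List A}
    (h : L.Reads c w) : ∃ c', L.ReadsTo c w c' := by
  induction h with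
  | nil c => exact ⟨c, LTS.ReadsTo.nil c⟩
  | cons s _ ih =>
    obtain ⟨c', hc'⟩ := ih
    exact ⟨c', LTS.ReadsTo.cons s hc'⟩

/-- For any relation `R` on LTSs lying between two-sided simulation and
trace-language equality, and any history-deterministic LTSs `A` and `B`:
`(A, B) ∈ R` iff their trace languages are equal. -/
theorem relation_iff_traceLang_eq {A : Type} (R : LTS A → LTS A → Prop)
    (hsim : ∀ P Q : LTS A, TwoSidedSim P Q → R P Q)
    (hlang : ∀ P Q : LTS A, P.TraceLang ≠ Q.TraceLang → ¬ R P Q)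
    (P Q : LTS A)
    (hP : HistoryDeterministic P) (hQ : HistoryDeterministic Q) :
    R P Q ↔ P.TraceLang = Q.TraceLang := by
  constructor
  · intro h
    by_contra hne
    exact hlang P Q hne h
  · intro heq
    obtain ⟨rP, hrP⟩ := hP
    obtain ⟨rQ, hrQ⟩ := hQ
    exact hsim P Q ⟨simulates_of_resolver hrP heq.ge,
      simulates_of_resolver hrQ heq.le⟩
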